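/- For 0 < u < v < 1 and the points x = u·e₁, y = v·e₁ of the unit ball 𝔹ⁿ, one has c̃_{𝔹ⁿ}(x,y) = ((1−uv)/(1−u))·th(ρ_{𝔹ⁿ}(x,y)/2); explicitly, c̃_{𝔹ⁿ}(x,y) = (v−u)/(1−u) and th(ρ_{𝔹ⁿ}(x,y)/2) = (v−u)/(1−uv). As v → u⁺ the ratio (1−uv)/(1−u) tends to 1+u, which approaches 1 as u → 0⁺ and 2 as u → 1⁻; hence the constants 1 and 2 in the inequality th(ρ_{𝔹ⁿ}/2) ≤ c̃_{𝔹ⁿ} ≤ 2·th(ρ_{𝔹ⁿ}/2) are best possible. -/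

import Mathlib

open Metric Set Filter

/-- The new hyperbolic type metric on the unit ball `𝔹ⁿ` (dimension `n + 2 ≥ 2`):
`c̃_{𝔹ⁿ}(x,y) = |x−y| / inf_{z∈S^{n−1}} max{|x−z|, |y−z|}`. -/
noncomputable def ctildeB {n : ℕ} (x y : EuclideanSpace ℝ (Fin (n + 2))) : ℝ :=
  dist x y /
    sInf ((fun z => max (dist x z) (dist y z)) '' sphere (0 : EuclideanSpace ℝ (Fin (n + 2))) 1)

/-- `th(ρ_{𝔹ⁿ}(x,y)/2) = |x−y| / √(|x−y|² + (1−|x|²)(1−|y|²))` for the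
hyperbolic metric of `𝔹ⁿ`. -/
noncomputable def thRhoB {n : ℕ} (x y : EuclideanSpace ℝ (Fin (n + 2))) : ℝ :=
  dist x y / Real.sqrt (dist x y ^ 2 + (1 - ‖x‖ ^ 2) * (1 - ‖y‖ ^ 2))

/-- For `0 < u < v < 1`, `x = u e₁`, `y = v e₁` in `𝔹ⁿ`:
`c̃_{𝔹ⁿ}(x,y) = (v−u)/(1−u)`, `th(ρ_{𝔹ⁿ}(x,y)/2) = (v−u)/(1−uv)`, so
`c̃_{𝔹ⁿ}(x,y) = ((1−uv)/(1−u))·th(ρ_{𝔹ⁿ}(x,y)/2)`; the ratio `(1−uv)/(1−u)`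
tends to `1+u` as `v → u⁺`, which tends to `1` as `u → 0⁺` and to `2` as `u → 1⁻`,
so the constants `1` and `2` in `th(ρ/2) ≤ c̃ ≤ 2 th(ρ/2)` are best possible. -/
theorem stmt_13 {n : ℕ} (u v : ℝ) (hu : 0 < u) (huv : u < v) (hv : v < 1)
    (e₁ : EuclideanSpace ℝ (Fin (n + 2))) (he₁ : e₁ = EuclideanSpace.single 0 1)
    (x y : EuclideanSpace ℝ (Fin (n + 2))) (hx : x = u • e₁) (hy : y = v • e₁) :
    ctildeB x y = (v - u) / (1 - u) ∧
    thRhoB x y = (v - u) / (1 - u * v) ∧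
    ctildeB x y = ((1 - u * v) / (1 - u)) * thRhoB x y ∧
    Tendsto (fun w : ℝ => (1 - u * w) / (1 - u)) (nhdsWithin u (Ioi u)) (nhds (1 + u)) ∧
    Tendsto (fun t : ℝ => 1 + t) (nhdsWithin 0 (Ioi 0)) (nhds 1) ∧
    Tendsto (fun t : ℝ => 1 + t) (nhdsWithin 1 (Iio 1)) (nhds 2) := by
  have he : ‖e₁‖ = 1 := by rw [he₁, EuclideanSpace.norm_single]; norm_num
  have hxn : ‖x‖ = u := by
    rw [hx, norm_smul, he, mul_one, Real.norm_eq_abs, abs_of_pos hu]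
  have hyn : ‖y‖ = v := by
    rw [hy, norm_smul, he, mul_one, Real.norm_eq_abs, abs_of_pos (hu.trans huv)]
  have hd : dist x y = v - u := by
    rw [hx, hy, dist_eq_norm, ← sub_smul, norm_smul, he, mul_one, Real.norm_eq_abs,
      abs_of_neg (by linarith), neg_sub]
  have hdx : dist x e₁ = 1 - u := by
    rw [hx, dist_eq_norm]
    nth_rewrite 2 [← one_smul ℝ e₁]
    rw [← sub_smul, norm_smul, he, mul_one, Real.norm_eq_abs,
      abs_of_neg (by linarith : u - 1 < 0), neg_sub]
  have hdy : dist y e₁ = 1 - v := by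
    rw [hy, dist_eq_norm]
    nth_rewrite 2 [← one_smul ℝ e₁]
    rw [← sub_smul, norm_smul, he, mul_one, Real.norm_eq_abs,
      abs_of_neg (by linarith : v - 1 < 0), neg_sub]
  have hInf : sInf ((fun z => max (dist x z) (dist y z)) ''
      sphere (0 : EuclideanSpace ℝ (Fin (n + 2))) 1) = 1 - u := by
    apply IsLeast.csInf_eq
    constructor
    · refine ⟨e₁, ?_, ?_⟩
      · simpa [mem_sphere, dist_eq_norm] using he
      · simp only [hdx, hdy]
        exact max_eq_left (by linarith)
    · rintro a ⟨z, hz, rfl⟩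
      have hz1 : dist z (0 : EuclideanSpace ℝ (Fin (n + 2))) = 1 := hz
      have h1 : 1 - u ≤ dist x z := by
        have := dist_triangle z x (0 : EuclideanSpace ℝ (Fin (n + 2)))
        rw [hz1, dist_comm z x] at this
        have hx0 : dist x (0 : EuclideanSpace ℝ (Fin (n + 2))) = u := by
          rw [dist_zero_right, hxn]
        linarith [this, hx0 ▸ this]
      exact le_trans h1 (le_max_left _ _)
  have hc : ctildeB x y = (v - u) / (1 - u) := by
    rw [ctildeB, hd, hInf]
  have hsq : dist x y ^ 2 + (1 - ‖x‖ ^ 2) * (1 - ‖y‖ ^ 2) = (1 - u * v) ^ 2 := by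
    rw [hd, hxn, hyn]; ring
  have huv1 : 0 < 1 - u * v := by nlinarith
  have ht : thRhoB x y = (v - u) / (1 - u * v) := by
    rw [thRhoB, hsq, Real.sqrt_sq huv1.le, hd]
  refine ⟨hc, ht, ?_, ?_, ?_, ?_⟩
  · have h1 : (1:ℝ) - u ≠ 0 := by linarith
    rw [hc, ht, div_mul_div_comm, mul_comm (1 - u * v), mul_div_mul_right _ _ huv1.ne']
  · have h1u : (1 : ℝ) - u ≠ 0 := by linarith
    have : Tendsto (fun w : ℝ => (1 - u * w) / (1 - u)) (nhds u) (nhds (1 + u)) := by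
      have := (Continuous.tendsto (((continuous_const.sub (continuous_const.mul continuous_id)).div_const _) : Continuous fun w : ℝ => (1 - u * w) / (1 - u)) u)
      convert this using 2
      · simp only [Pi.sub_apply, Pi.mul_apply, id_eq]
      · simp only [Pi.sub_apply, Pi.mul_apply, id_eq]
        rw [eq_div_iff h1u]
        ring
    exact this.mono_left nhdsWithin_le_nhds
  · have h : Tendsto (fun t : ℝ => 1 + t) (nhds 0) (nhds 1) := by
      have := ((continuous_const.add continuous_id) : Continuous fun t : ℝ => 1 + t).tendsto (0 : ℝ)
      simpa [Pi.add_def] using this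
    exact h.mono_left nhdsWithin_le_nhds
  · have h : Tendsto (fun t : ℝ => 1 + t) (nhds 1) (nhds 2) := by
      have := ((continuous_const.add continuous_id) : Continuous fun t : ℝ => 1 + t).tendsto (1 : ℝ)
      norm_num at this
      exact this
    exact h.mono_left nhdsWithin_le_nhds
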